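/- arXiv:1011.4532 — 6 statements merged into one kernel-verified Lean document; each statement's English description precedes it below -/
import Mathlib

section
/- In a balanced strictly binary tree with u leaves, any set of r nodes has at most O(r·(1 + log₂(u/r))) distinct ancestors (where each node is counted as an ancestor of itself). Concretely, the number of nodes lying on root-to-node paths for r given nodes is at most c·(r + r·log₂(u/r)) for some absolute constant c. -/
/-- A strictly binary tree with natural-number-labeled leaves (a wavelet tree shape). -/
inductive BTree where
  | leaf : ℕ → BTree
  | node : BTree → BTree → BTree

namespace BTree

/-- The leaves of the tree, in left-to-right order. -/
def leaves : BTree → List ℕ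
  | leaf a => [a]
  | node l r => l.leaves ++ r.leaves

/-- Number of leaves. -/
def numLeaves (t : BTree) : ℕ := t.leaves.length

/-- Balanced: at every node, the numbers of leaves of the two subtrees differ by at most 1. -/
def balanced : BTree → Prop
  | leaf _ => True
  | node l r => ((l.numLeaves : ℤ) - (r.numLeaves : ℤ) ≤ 1) ∧
      ((r.numLeaves : ℤ) - (l.numLeaves : ℤ) ≤ 1) ∧ l.balanced ∧ r.balanced

/-- A (root-to-node) path, given as a list of booleans (`false` = go left). -/
def validPath : BTree → List Bool → Prop
  | _, [] => True
  | leaf _, _ :: _ => False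
  | node l r, b :: p => if b then r.validPath p else l.validPath p

/-- The subtree reached by following a path. -/
def subtreeAt : BTree → List Bool → Option BTree
  | t, [] => some t
  | leaf _, _ :: _ => none
  | node l r, b :: p => if b then r.subtreeAt p else l.subtreeAt p

/-- The index (0-based, in left-to-right leaf order) of the first leaf below the node at a path. -/
def pathOffset : BTree → List Bool → ℕ
  | _, [] => 0
  | leaf _, _ :: _ => 0
  | node l r, b :: p => if b then l.numLeaves + r.pathOffset p else l.pathOffset p

/-- Number of leaves below the node at a path (0 if the path is invalid). -/
def pathLeaves (t : BTree) (p : List Bool) : ℕ := ((t.subtreeAt p).map numLeaves).getD 0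

/-- The set of (positions of) leaves descending from the node at a path. -/
def leafInterval (t : BTree) (p : List Bool) : Finset ℕ :=
  Finset.Ico (t.pathOffset p) (t.pathOffset p + t.pathLeaves p)

end BTree

namespace BTree

lemma one_le_numLeaves (t : BTree) : 1 ≤ t.numLeaves := by
  induction t with
  | leaf a => simp [numLeaves, leaves]
  | node l r ihl ihr =>
    simp only [numLeaves, leaves, List.length_append] at *
    omega

lemma numLeaves_node (l r : BTree) :
    (node l r).numLeaves = l.numLeaves + r.numLeaves := by
  simp [numLeaves, leaves]

lemma length_le_clog : ∀ (t : BTree), t.balanced → ∀ p : List Bool,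
    t.validPath p → p.length ≤ Nat.clog 2 t.numLeaves := by
  intro t
  induction t with
  | leaf a =>
    intro _ p hp
    cases p with
    | nil => simp
    | cons b q => exact absurd hp (by simp [validPath])
  | node l r ihl ihr =>
    intro hb p hp
    obtain ⟨h1, h2, hbl, hbr⟩ := hb
    cases p with
    | nil => simp
    | cons b q =>
      have hn := numLeaves_node l r
      have hl1 := l.one_le_numLeaves
      have hr1 := r.one_le_numLeaves
      have hlr : l.numLeaves ≤ r.numLeaves + 1 ∧ r.numLeaves ≤ l.numLeaves + 1 := by
        constructor <;> omega
      have hkey : Nat.clog 2 (node l r).numLeaves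
          = Nat.clog 2 (((node l r).numLeaves + 1) / 2) + 1 := by
        rw [Nat.clog_of_two_le (by norm_num) (by omega)]
        congr 2 <;> omega
      cases b with
      | false =>
        have hv : l.validPath q := by simpa [validPath] using hp
        have := ihl hbl q hv
        have hmono : Nat.clog 2 l.numLeaves ≤ Nat.clog 2 (((node l r).numLeaves + 1) / 2) :=
          Nat.clog_mono_right 2 (by omega)
        simp only [List.length_cons]
        omega
      | true =>
        have hv : r.validPath q := by simpa [validPath] using hp
        have := ihr hbr q hv
        have hmono : Nat.clog 2 r.numLeaves ≤ Nat.clog 2 (((node l r).numLeaves + 1) / 2) :=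
          Nat.clog_mono_right 2 (by omega)
        simp only [List.length_cons]
        omega

end BTree

lemma sum_two_pow' (n : ℕ) : ∑ d ∈ Finset.range n, 2 ^ d = 2 ^ n - 1 := by
  induction n with
  | zero => simp
  | succ n ih =>
    rw [Finset.sum_range_succ, ih, pow_succ]
    have : 1 ≤ 2 ^ n := Nat.one_le_two_pow
    omega

/-- In a balanced strictly binary tree with `u` leaves, any set of `r` nodes has at most
`c·(r + r·log₂(u/r))` distinct ancestors (each node counting as an ancestor of itself),
for some absolute constant `c`. Nodes are identified with root-to-node paths, and the
ancestors of a node are the prefixes of its path. -/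
theorem ancestors_of_node_set :
    ∃ c : ℕ, 0 < c ∧
      ∀ (t : BTree) (P : Finset (List Bool)),
        t.balanced → (∀ p ∈ P, t.validPath p) →
        (P.biUnion fun p => p.inits.toFinset).card ≤
          c * (P.card + P.card * Nat.log 2 (t.numLeaves / P.card)) := by
  refine ⟨4, by norm_num, ?_⟩
  intro t P hbal hval
  set A := P.biUnion (fun p => p.inits.toFinset) with hA
  set u := t.numLeaves with hu
  set r := P.card with hr
  set a := Nat.log 2 (u / r) with ha
  rcases Nat.eq_zero_or_pos r with hr0 | hr0
  · have hPe : P = ∅ := Finset.card_eq_zero.mp hr0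
    simp [hA, hPe]
  set H := Nat.clog 2 u with hH
  set L := Nat.log 2 r with hL
  -- every ancestor has length at most H
  have hlen : ∀ q ∈ A, q.length ∈ Finset.range (H + 1) := by
    intro q hq
    simp only [hA, Finset.mem_biUnion, List.mem_toFinset, List.mem_inits] at hq
    obtain ⟨p, hp, hqp⟩ := hq
    have h1 : p.length ≤ H := BTree.length_le_clog t hbal p (hval p hp)
    have h2 := hqp.length_le
    simp only [Finset.mem_range]
    omega
  have hcard : A.card = ∑ d ∈ Finset.range (H + 1),
      (A.filter fun q => q.length = d).card :=
    Finset.card_eq_sum_card_fiberwise hlen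
  -- at each depth, at most r ancestors
  have hb1 : ∀ d, (A.filter fun q => q.length = d).card ≤ r := by
    intro d
    calc (A.filter fun q => q.length = d).card
        ≤ (P.image fun p => p.take d).card := by
          apply Finset.card_le_card
          intro q hq
          simp only [Finset.mem_filter, hA, Finset.mem_biUnion, List.mem_toFinset,
            List.mem_inits] at hq
          obtain ⟨⟨p, hp, hqp⟩, hlenq⟩ := hq
          refine Finset.mem_image.mpr ⟨p, hp, ?_⟩
          rw [← hlenq]
          exact (List.prefix_iff_eq_take.mp hqp).symm
      _ ≤ r := Finset.card_image_le
  -- at each depth d, at most 2^d ancestors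
  have hb2 : ∀ d, (A.filter fun q => q.length = d).card ≤ 2 ^ d := by
    intro d
    have hsub : (A.filter fun q => q.length = d) ⊆
        (Finset.univ : Finset (List.Vector Bool d)).image (fun v => v.toList) := by
      intro q hq
      simp only [Finset.mem_filter] at hq
      exact Finset.mem_image.mpr ⟨⟨q, hq.2⟩, Finset.mem_univ _, rfl⟩
    calc (A.filter fun q => q.length = d).card
        ≤ _ := Finset.card_le_card hsub
      _ ≤ (Finset.univ : Finset (List.Vector Bool d)).card := Finset.card_image_le
      _ = 2 ^ d := by simp [Finset.card_univ, card_vector]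
  have h2L : 2 ^ L ≤ r := Nat.pow_log_le_self 2 hr0.ne'
  have hrlt : r < 2 ^ (L + 1) := Nat.lt_pow_succ_log_self one_lt_two r
  have hulta : u / r < 2 ^ (a + 1) := Nat.lt_pow_succ_log_self one_lt_two _
  have huu : u < (u / r + 1) * r := by
    have h1 := Nat.div_add_mod u r
    have h2 := Nat.mod_lt u hr0
    nlinarith
  have hu2 : u < 2 ^ (a + L + 2) := by
    calc u < (u / r + 1) * r := huu
      _ ≤ 2 ^ (a + 1) * 2 ^ (L + 1) := Nat.mul_le_mul hulta hrlt.le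
      _ = 2 ^ (a + L + 2) := by rw [← pow_add]; ring_nf
  have hHle : H ≤ a + L + 2 := (Nat.clog_le_iff_le_pow one_lt_two).mpr hu2.le
  by_cases hHL : H ≤ L
  · -- few levels: use the 2^d bound throughout
    have ht : A.card ≤ ∑ d ∈ Finset.range (H + 1), 2 ^ d := by
      rw [hcard]; exact Finset.sum_le_sum fun d _ => hb2 d
    rw [sum_two_pow'] at ht
    have hp1 : 2 ^ (H + 1) ≤ 2 ^ (L + 1) := Nat.pow_le_pow_right (by norm_num) (by omega)
    have hp2 : 2 ^ (L + 1) = 2 * 2 ^ L := by ring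
    have hra : 0 ≤ r * a := Nat.zero_le _
    calc A.card ≤ 2 ^ (H + 1) - 1 := ht
      _ ≤ 2 * r := by omega
      _ ≤ 4 * r := by omega
      _ ≤ 4 * (r + r * a) := by
          apply Nat.mul_le_mul_left
          exact Nat.le_add_right _ _
  · push_neg at hHL
    have hsplit : ∑ d ∈ Finset.range (H + 1), (A.filter fun q => q.length = d).card
        = ∑ d ∈ Finset.range (L + 1), (A.filter fun q => q.length = d).card
          + ∑ d ∈ Finset.Ico (L + 1) (H + 1), (A.filter fun q => q.length = d).card := by
      rw [Finset.range_eq_Ico, Finset.range_eq_Ico, Finset.sum_Ico_consecutive _ (Nat.zero_le _) (by omega)]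
    have hfirst : ∑ d ∈ Finset.range (L + 1), (A.filter fun q => q.length = d).card
        ≤ 2 ^ (L + 1) - 1 := by
      rw [← sum_two_pow']
      exact Finset.sum_le_sum fun d _ => hb2 d
    have hsecond : ∑ d ∈ Finset.Ico (L + 1) (H + 1), (A.filter fun q => q.length = d).card
        ≤ (H - L) * r := by
      calc ∑ d ∈ Finset.Ico (L + 1) (H + 1), (A.filter fun q => q.length = d).card
          ≤ ∑ _d ∈ Finset.Ico (L + 1) (H + 1), r := Finset.sum_le_sum fun d _ => hb1 d
        _ = (H - L) * r := by rw [Finset.sum_const, Nat.card_Ico, smul_eq_mul]; congr 1; omega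
    have hHL2 : H - L ≤ a + 2 := by omega
    have hp2 : 2 ^ (L + 1) = 2 * 2 ^ L := by ring
    have htot : A.card ≤ 2 * r + (a + 2) * r := by
      rw [hcard, hsplit]
      have : (H - L) * r ≤ (a + 2) * r := Nat.mul_le_mul_right r hHL2
      omega
    calc A.card ≤ 2 * r + (a + 2) * r := htot
      _ = 4 * r + a * r := by ring
      _ ≤ 4 * r + 4 * (r * a) := by
          have : a * r ≤ 4 * (r * a) := by rw [mul_comm a r]; omega
          omega
      _ = 4 * (r + r * a) := by ring
end

section
/- In a balanced strictly binary tree with u leaves, the number of distinct ancestors of any r leaves all chosen from within a contiguous block of ℓ consecutive leaves is O(log u + r·log₂(ℓ/r)). -/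
namespace BTreeAux

open BTree

lemma one_le_numLeaves (t : BTree) : 1 ≤ t.numLeaves := by
  induction t with
  | leaf a => simp [numLeaves, leaves]
  | node l r ihl ihr => simp only [numLeaves, leaves, List.length_append] at *; omega

lemma numLeaves_node (l r : BTree) : (node l r).numLeaves = l.numLeaves + r.numLeaves := by
  simp [numLeaves, leaves]

lemma subtreeAt_append (t : BTree) (q q' : List Bool) :
    t.subtreeAt (q ++ q') = (t.subtreeAt q).bind (fun s => s.subtreeAt q') := by
  induction q generalizing t with
  | nil => simp [subtreeAt]
  | cons b p ih =>
    cases t with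
    | leaf a => simp [subtreeAt]
    | node l r => by_cases hb : b <;> simp [subtreeAt, hb, ih]

lemma pathOffset_append (t : BTree) (q q' : List Bool) (s : BTree)
    (h : t.subtreeAt q = some s) :
    t.pathOffset (q ++ q') = t.pathOffset q + s.pathOffset q' := by
  induction q generalizing t with
  | nil => simp only [subtreeAt, Option.some.injEq] at h; subst h
           simp [pathOffset]
  | cons b p ih =>
    cases t with
    | leaf a => simp [subtreeAt] at h
    | node l r =>
      cases b <;> simp only [subtreeAt, pathOffset, List.cons_append, List.append_eq, if_true,
        if_false, Bool.false_eq_true, cond_false, cond_true] at h ⊢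
      · exact ih l h
      · rw [ih r h]; omega

lemma offset_add_le (t : BTree) (q : List Bool) (s : BTree) (h : t.subtreeAt q = some s) :
    t.pathOffset q + s.numLeaves ≤ t.numLeaves := by
  induction q generalizing t with
  | nil => simp only [subtreeAt, Option.some.injEq] at h; subst h; simp [pathOffset]
  | cons b p ih =>
    cases t with
    | leaf a => simp [subtreeAt] at h
    | node l r =>
      cases b <;> simp only [subtreeAt, pathOffset, numLeaves_node, if_true, if_false,
        Bool.false_eq_true, cond_false, cond_true] at h ⊢
      · have := ih l h; omega
      · have := ih r h; omega

lemma size_lower (q : List Bool) : ∀ (t s : BTree), t.balanced →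
    t.subtreeAt q = some s → t.numLeaves < 2 ^ q.length * (s.numLeaves + 1) := by
  induction q with
  | nil =>
    intro t s _ h
    simp only [subtreeAt, Option.some.injEq] at h; subst h
    simp
  | cons b p ih =>
    intro t s hbal h
    cases t with
    | leaf a => simp [subtreeAt] at h
    | node l r =>
      obtain ⟨h1, h2, hl, hr⟩ := hbal
      have hpow : (2:ℕ) ^ (b :: p).length * (s.numLeaves + 1)
          = 2 * (2 ^ p.length * (s.numLeaves + 1)) := by
        rw [List.length_cons, pow_succ]; ring
      rw [hpow, numLeaves_node]
      cases b <;> simp only [subtreeAt, if_true, if_false, Bool.false_eq_true,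
        cond_false, cond_true] at h
      · have := ih l s hl h; omega
      · have := ih r s hr h; omega

lemma size_upper (q : List Bool) : ∀ (t s : BTree), t.balanced →
    t.subtreeAt q = some s → 2 ^ q.length * s.numLeaves < t.numLeaves + 2 ^ q.length := by
  induction q with
  | nil =>
    intro t s _ h
    simp only [subtreeAt, Option.some.injEq] at h; subst h
    simp
  | cons b p ih =>
    intro t s hbal h
    cases t with
    | leaf a => simp [subtreeAt] at h
    | node l r =>
      obtain ⟨h1, h2, hl, hr⟩ := hbal
      have hpow1 : (2:ℕ) ^ (b :: p).length * s.numLeaves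
          = 2 * (2 ^ p.length * s.numLeaves) := by
        rw [List.length_cons, pow_succ]; ring
      have hpow2 : (2:ℕ) ^ (b :: p).length = 2 * 2 ^ p.length := by
        rw [List.length_cons, pow_succ]; ring
      rw [hpow1, hpow2, numLeaves_node]
      by_cases hb : b <;> simp only [subtreeAt, hb, if_true, if_false] at h
      · have := ih r s hr h; omega
      · have := ih l s hl h; omega

lemma depth_le (t : BTree) (p : List Bool) (x : ℕ) (hbal : t.balanced)
    (h : t.subtreeAt p = some (BTree.leaf x)) : p.length ≤ Nat.clog 2 t.numLeaves := by
  rcases List.eq_nil_or_concat p with rfl | ⟨q, b, rfl⟩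
  · simp
  · rw [List.concat_eq_append, subtreeAt_append] at h
    cases hq : t.subtreeAt q with
    | none => rw [hq] at h; simp at h
    | some s =>
      rw [hq] at h; simp only [Option.bind_some] at h
      cases s with
      | leaf a => simp [subtreeAt] at h
      | node l r =>
        have h2 : 2 ≤ (node l r).numLeaves := by
          have := one_le_numLeaves l; have := one_le_numLeaves r
          rw [numLeaves_node]; omega
        have hupper := size_upper q t _ hbal hq
        have hmul : 2 ^ q.length * 2 ≤ 2 ^ q.length * (node l r).numLeaves :=
          Nat.mul_le_mul_left _ h2
        have hlt : 2 ^ q.length < t.numLeaves := by omega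
        have := (Nat.lt_clog_iff_pow_lt (one_lt_two)).mpr hlt
        simp only [List.concat_eq_append, List.length_append, List.length_cons,
          List.length_nil]
        omega

lemma offsets_disjoint (q1 : List Bool) : ∀ (t : BTree) (q2 : List Bool) (s1 s2 : BTree),
    q1.length = q2.length → q1 ≠ q2 → t.subtreeAt q1 = some s1 → t.subtreeAt q2 = some s2 →
    t.pathOffset q1 + s1.numLeaves ≤ t.pathOffset q2 ∨
      t.pathOffset q2 + s2.numLeaves ≤ t.pathOffset q1 := by
  induction q1 with
  | nil =>
    intro t q2 s1 s2 hlen hne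
    cases q2 with
    | nil => exact absurd rfl hne
    | cons b p => simp at hlen
  | cons b1 p1 ih =>
    intro t q2 s1 s2 hlen hne h1 h2
    cases q2 with
    | nil => simp at hlen
    | cons b2 p2 =>
      cases t with
      | leaf a => simp [subtreeAt] at h1
      | node l r =>
        simp only [List.length_cons, Nat.add_right_cancel_iff] at hlen
        cases b1 <;> cases b2 <;>
          simp only [subtreeAt, pathOffset, if_true, if_false, Bool.false_eq_true,
            cond_false, cond_true] at h1 h2 ⊢
        · have hpne : p1 ≠ p2 := fun hp => hne (by rw [hp])
          exact ih l p2 s1 s2 hlen hpne h1 h2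
        · left
          have := offset_add_le l p1 s1 h1
          omega
        · right
          have := offset_add_le l p2 s2 h2
          omega
        · have hpne : p1 ≠ p2 := fun hp => hne (by rw [hp])
          rcases ih r p2 s1 s2 hlen hpne h1 h2 with hc | hc
          · left; omega
          · right; omega

lemma gap_count (O : Finset ℕ) (lo hi s : ℕ) (hs : 0 < s)
    (hmem : ∀ x ∈ O, lo ≤ x ∧ x < hi)
    (hgap : ∀ x ∈ O, ∀ y ∈ O, x < y → x + s ≤ y) :
    O.card ≤ (hi - lo + s - 1) / s := by
  rcases O.eq_empty_or_nonempty with rfl | ⟨x0, hx0⟩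
  · simp
  have hlohi : lo < hi := by
    have := hmem x0 hx0; omega
  have key : ∀ x ∈ O, ∀ y ∈ O, x < y → (x - lo) / s < (y - lo) / s := by
    intro x hx y hy hxy
    have hg := hgap x hx y hy hxy
    have hxlo := (hmem x hx).1
    have hle : x - lo + s ≤ y - lo := by omega
    calc (x - lo) / s < (x - lo) / s + 1 := Nat.lt_succ_self _
      _ = (x - lo + s) / s := (Nat.add_div_right _ hs).symm
      _ ≤ (y - lo) / s := Nat.div_le_div_right hle
  have hinj : Set.InjOn (fun x => (x - lo) / s) O := by
    intro x hx y hy hxy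
    by_contra hne
    rcases Nat.lt_or_ge x y with h | h
    · exact absurd hxy (Nat.ne_of_lt (key x hx y hy h))
    · have : x ≠ y := hne
      have hlt : y < x := by omega
      exact absurd hxy.symm (Nat.ne_of_lt (key y hy x hx hlt))
  rw [← Finset.card_image_of_injOn hinj]
  have hsub : O.image (fun x => (x - lo) / s) ⊆ Finset.range ((hi - lo + s - 1) / s) := by
    intro m hm
    simp only [Finset.mem_image] at hm
    obtain ⟨x, hx, rfl⟩ := hm
    rw [Finset.mem_range]
    have hxm := hmem x hx
    have h1 : x - lo ≤ hi - lo - 1 := by omega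
    have h2 : (x - lo) / s ≤ (hi - lo - 1) / s := Nat.div_le_div_right h1
    have h4 : hi - lo - 1 + s = hi - lo + s - 1 := by omega
    have h3 : (hi - lo - 1) / s + 1 = (hi - lo + s - 1) / s := by
      rw [← h4]; exact (Nat.add_div_right _ hs).symm
    exact lt_of_le_of_lt h2 (h3 ▸ Nat.lt_succ_self _)
  simpa using Finset.card_le_card hsub

lemma sum_div_pow_le (k : ℕ) : ∀ T : ℕ, ∑ j ∈ Finset.range (k + 1), T / 2 ^ j ≤ 2 * T := by
  induction k with
  | zero => intro T; simp; omega
  | succ k ih =>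
    intro T
    rw [Finset.sum_range_succ']
    have hre : ∀ j, T / 2 ^ (j + 1) = (T / 2) / 2 ^ j := by
      intro j
      rw [Nat.div_div_eq_div_mul, pow_succ, mul_comm]
    simp only [hre]
    have := ih (T / 2)
    have ht2 : 2 * (T / 2) ≤ T := by omega
    simp only [pow_zero, Nat.div_one]
    omega

lemma level_bound (t : BTree) (P : Finset (List Bool)) (a ℓ d : ℕ)
    (hbal : t.balanced)
    (hleaf : ∀ p ∈ P, ∃ x, t.subtreeAt p = some (BTree.leaf x))
    (hwin : ∀ p ∈ P, a ≤ t.pathOffset p ∧ t.pathOffset p < a + ℓ) :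
    ((P.biUnion fun p => p.inits.toFinset).filter (fun q => q.length = d)).card ≤
      min P.card (ℓ / (max 1 (t.numLeaves / 2 ^ d)) + 3) := by
  classical
  set u := t.numLeaves with hu
  set s := max 1 (u / 2 ^ d) with hsdef
  have hs : 0 < s := lt_of_lt_of_le one_pos (le_max_left _ _)
  set Ad := ((P.biUnion fun p => p.inits.toFinset).filter (fun q => q.length = d)) with hAd
  have hmemAd : ∀ q ∈ Ad, q.length = d ∧ ∃ p ∈ P, q <+: p := by
    intro q hq
    rw [hAd, Finset.mem_filter, Finset.mem_biUnion] at hq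
    obtain ⟨⟨p, hp, hqp⟩, hlen⟩ := hq
    rw [List.mem_toFinset, List.mem_inits] at hqp
    exact ⟨hlen, p, hp, hqp⟩
  refine le_min ?_ ?_
  · -- bound by P.card
    have hsub : Ad ⊆ P.image (List.take d) := by
      intro q hq
      obtain ⟨hlen, p, hp, hqp⟩ := hmemAd q hq
      rw [Finset.mem_image]
      exact ⟨p, hp, by rw [List.prefix_iff_eq_take] at hqp; rw [← hlen, ← hqp]⟩
    exact le_trans (Finset.card_le_card hsub) Finset.card_image_le
  · -- bound by intervals
    have key : ∀ q ∈ Ad, ∃ sq, t.subtreeAt q = some sq ∧ s ≤ sq.numLeaves ∧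
        sq.numLeaves ≤ s + 1 ∧ a - s ≤ t.pathOffset q ∧ t.pathOffset q < a + ℓ := by
      intro q hq
      obtain ⟨hlen, p, hp, hqp⟩ := hmemAd q hq
      obtain ⟨q', rfl⟩ := hqp
      obtain ⟨x, hx⟩ := hleaf _ hp
      rw [subtreeAt_append] at hx
      cases hsq : t.subtreeAt q with
      | none => rw [hsq] at hx; simp at hx
      | some sq =>
        rw [hsq] at hx; simp only [Option.bind_some] at hx
        refine ⟨sq, rfl, ?_, ?_, ?_, ?_⟩
        · -- lower size bound
          have hlow := size_lower q t sq hbal hsq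
          rw [hlen] at hlow
          have h1 : u / 2 ^ d < sq.numLeaves + 1 := by
            rw [Nat.div_lt_iff_lt_mul (pow_pos two_pos d)]
            calc u < 2 ^ d * (sq.numLeaves + 1) := hlow
              _ = (sq.numLeaves + 1) * 2 ^ d := by ring
          have := one_le_numLeaves sq
          omega
        · -- upper size bound
          have hup := size_upper q t sq hbal hsq
          rw [hlen] at hup
          have hn1 : 1 ≤ sq.numLeaves := one_le_numLeaves sq
          have h3 : sq.numLeaves - 1 ≤ u / 2 ^ d := by
            rw [Nat.le_div_iff_mul_le (pow_pos two_pos d), Nat.sub_mul]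
            have hcm : sq.numLeaves * 2 ^ d = 2 ^ d * sq.numLeaves := Nat.mul_comm _ _
            omega
          have : u / 2 ^ d ≤ s := le_max_right _ _
          omega
        · -- offset lower
          have hoff := pathOffset_append t q q' sq hsq
          have hoa := offset_add_le sq q' _ hx
          have hwp := hwin _ hp
          have hl1 : (BTree.leaf x).numLeaves = 1 := by simp [numLeaves, leaves]
          rw [hl1] at hoa
          -- sq.numLeaves ≤ s + 1 needed:
          have hup := size_upper q t sq hbal hsq
          rw [hlen] at hup
          have hn1 : 1 ≤ sq.numLeaves := one_le_numLeaves sq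
          have h3 : sq.numLeaves - 1 ≤ u / 2 ^ d := by
            rw [Nat.le_div_iff_mul_le (pow_pos two_pos d), Nat.sub_mul]
            have hcm : sq.numLeaves * 2 ^ d = 2 ^ d * sq.numLeaves := Nat.mul_comm _ _
            omega
          have h4 : u / 2 ^ d ≤ s := le_max_right _ _
          omega
        · -- offset upper
          have hoff := pathOffset_append t q q' sq hsq
          have hwp := hwin _ hp
          omega
    -- gaps between offsets
    have hgapQ : ∀ q1 ∈ Ad, ∀ q2 ∈ Ad, t.pathOffset q1 < t.pathOffset q2 →
        t.pathOffset q1 + s ≤ t.pathOffset q2 := by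
      intro q1 hq1 q2 hq2 hlt
      obtain ⟨s1, hs1, hns1, _, _, _⟩ := key q1 hq1
      obtain ⟨s2, hs2, hns2, _, _, _⟩ := key q2 hq2
      have hne : q1 ≠ q2 := by
        intro h; rw [h] at hlt; exact lt_irrefl _ hlt
      have hlen1 := (hmemAd q1 hq1).1
      have hlen2 := (hmemAd q2 hq2).1
      have hd := offsets_disjoint q1 t q2 s1 s2 (by rw [hlen1, hlen2]) hne hs1 hs2
      have hn2pos := one_le_numLeaves s2
      rcases hd with h | h
      · omega
      · omega
    have hinj : Set.InjOn t.pathOffset Ad := by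
      intro q1 hq1 q2 hq2 heq
      by_contra hne
      obtain ⟨s1, hs1, hns1, _, _, _⟩ := key q1 hq1
      obtain ⟨s2, hs2, hns2, _, _, _⟩ := key q2 hq2
      have hlen1 := (hmemAd q1 hq1).1
      have hlen2 := (hmemAd q2 hq2).1
      have hd := offsets_disjoint q1 t q2 s1 s2 (by rw [hlen1, hlen2]) hne hs1 hs2
      have := one_le_numLeaves s1
      have := one_le_numLeaves s2
      omega
    have hcard : Ad.card = (Ad.image t.pathOffset).card :=
      (Finset.card_image_of_injOn hinj).symm
    rw [hcard]
    have hgc := gap_count (Ad.image t.pathOffset) (a - s) (a + ℓ) s hs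
      (by
        intro o ho
        rw [Finset.mem_image] at ho
        obtain ⟨q, hq, rfl⟩ := ho
        obtain ⟨sq, _, _, _, h1, h2⟩ := key q hq
        exact ⟨h1, h2⟩)
      (by
        intro o1 ho1 o2 ho2 hlt
        rw [Finset.mem_image] at ho1 ho2
        obtain ⟨q1, hq1, rfl⟩ := ho1
        obtain ⟨q2, hq2, rfl⟩ := ho2
        exact hgapQ q1 hq1 q2 hq2 hlt)
    refine le_trans hgc ?_
    have h1 : a + ℓ - (a - s) + s - 1 ≤ ℓ + 2 * s := by omega
    have h2 : (a + ℓ - (a - s) + s - 1) / s ≤ (ℓ + 2 * s) / s := Nat.div_le_div_right h1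
    have h3 : (ℓ + 2 * s) / s = ℓ / s + 2 := Nat.add_mul_div_right ℓ 2 hs
    omega

lemma numeric (u ℓ r D : ℕ) (hr : 0 < r) (hD : D = Nat.clog 2 u) :
    ∑ d ∈ Finset.range (D + 1), min r (ℓ / max 1 (u / 2 ^ d) + 3) ≤
      100 * (D + r * max 1 (Nat.log 2 (ℓ / r))) := by
  set M := max 1 (Nat.log 2 (ℓ / r)) with hMdef
  have hM1 : 1 ≤ M := le_max_left _ _
  rcases le_or_gt D (M + 1) with hc | hc
  · calc ∑ d ∈ Finset.range (D + 1), min r (ℓ / max 1 (u / 2 ^ d) + 3)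
        ≤ ∑ _d ∈ Finset.range (D + 1), r := Finset.sum_le_sum fun i _ => min_le_left _ _
      _ = (D + 1) * r := by rw [Finset.sum_const, Finset.card_range]; ring
      _ ≤ 100 * (D + r * M) := by nlinarith
  · set k := D - M - 1 with hk
    have hD1 : 1 ≤ D := by omega
    have hu2 : 2 ^ (D - 1) < u := by
      rw [← Nat.lt_clog_iff_pow_lt one_lt_two, ← hD]; omega
    have hpow2k : (0:ℕ) < 2 ^ k := pow_pos two_pos k
    have hMle : 2 ^ M ≤ u / 2 ^ k := by
      rw [Nat.le_div_iff_mul_le hpow2k]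
      calc 2 ^ M * 2 ^ k = 2 ^ (D - 1) := by rw [← pow_add]; congr 1; omega
        _ ≤ u := hu2.le
    have hpos : 0 < u / 2 ^ k := lt_of_lt_of_le (pow_pos two_pos M) hMle
    set T := ℓ / (u / 2 ^ k) with hT
    have hT2r : T ≤ 2 * r := by
      have h1 : ℓ / r < 2 ^ (M + 1) := by
        refine lt_of_lt_of_le (Nat.lt_pow_succ_log_self one_lt_two _) ?_
        exact Nat.pow_le_pow_right two_pos (by omega)
      have h2 : ℓ < 2 ^ (M + 1) * r := (Nat.div_lt_iff_lt_mul hr).mp h1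
      have h3 : T ≤ ℓ / 2 ^ M := Nat.div_le_div_left hMle (pow_pos two_pos M)
      have h4 : ℓ / 2 ^ M < 2 * r := by
        rw [Nat.div_lt_iff_lt_mul (pow_pos two_pos M)]
        calc ℓ < 2 ^ (M + 1) * r := h2
          _ = 2 * r * 2 ^ M := by rw [pow_succ]; ring
      omega
    have hsplit : Finset.range (D + 1) =
        Finset.Ico 0 (k + 1) ∪ Finset.Ico (k + 1) (D + 1) := by
      rw [Finset.range_eq_Ico, ← Finset.Ico_union_Ico_eq_Ico (by omega : 0 ≤ k + 1)
        (by omega : k + 1 ≤ D + 1)]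
    have hdisj : Disjoint (Finset.Ico 0 (k + 1)) (Finset.Ico (k + 1) (D + 1)) := by
      apply Finset.Ico_disjoint_Ico_consecutive
    rw [hsplit, Finset.sum_union hdisj]
    have hbot : ∑ d ∈ Finset.Ico (k + 1) (D + 1), min r (ℓ / max 1 (u / 2 ^ d) + 3)
        ≤ (M + 1) * r := by
      calc ∑ d ∈ Finset.Ico (k + 1) (D + 1), min r (ℓ / max 1 (u / 2 ^ d) + 3)
          ≤ ∑ _d ∈ Finset.Ico (k + 1) (D + 1), r :=
            Finset.sum_le_sum fun i _ => min_le_left _ _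
        _ = (M + 1) * r := by
            rw [Finset.sum_const, Nat.card_Ico]
            congr 1
            omega
    have htop : ∑ d ∈ Finset.Ico 0 (k + 1), min r (ℓ / max 1 (u / 2 ^ d) + 3)
        ≤ 2 * T + 3 * (k + 1) := by
      have hterm : ∀ d ∈ Finset.Ico 0 (k + 1),
          min r (ℓ / max 1 (u / 2 ^ d) + 3) ≤ T / 2 ^ (k - d) + 3 := by
        intro d hd
        rw [Finset.mem_Ico] at hd
        have hdk : d ≤ k := by omega
        refine le_trans (min_le_right _ _) ?_
        have hsd : 2 ^ (k - d) * (u / 2 ^ k) ≤ max 1 (u / 2 ^ d) := by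
          refine le_trans ?_ (le_max_right _ _)
          have hdd : u / 2 ^ k = u / 2 ^ d / 2 ^ (k - d) := by
            rw [Nat.div_div_eq_div_mul, ← pow_add]
            congr 2
            omega
          rw [hdd]
          exact Nat.mul_div_le _ _
        have hposkd : 0 < 2 ^ (k - d) * (u / 2 ^ k) :=
          Nat.mul_pos (pow_pos two_pos _) hpos
        have hdiv : ℓ / max 1 (u / 2 ^ d) ≤ T / 2 ^ (k - d) := by
          calc ℓ / max 1 (u / 2 ^ d) ≤ ℓ / (2 ^ (k - d) * (u / 2 ^ k)) :=
              Nat.div_le_div_left hsd hposkd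
            _ = T / 2 ^ (k - d) := by
              rw [hT, Nat.div_div_eq_div_mul, mul_comm]
        omega
      calc ∑ d ∈ Finset.Ico 0 (k + 1), min r (ℓ / max 1 (u / 2 ^ d) + 3)
          ≤ ∑ d ∈ Finset.Ico 0 (k + 1), (T / 2 ^ (k - d) + 3) := Finset.sum_le_sum hterm
        _ = (∑ d ∈ Finset.range (k + 1), T / 2 ^ (k - d)) + 3 * (k + 1) := by
            rw [← Finset.range_eq_Ico, Finset.sum_add_distrib, Finset.sum_const,
              Finset.card_range, smul_eq_mul]
            ring
        _ ≤ 2 * T + 3 * (k + 1) := by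
            have hrefl : ∑ d ∈ Finset.range (k + 1), T / 2 ^ (k - d)
                = ∑ j ∈ Finset.range (k + 1), T / 2 ^ j := by
              rw [← Finset.sum_range_reflect]
              apply Finset.sum_congr rfl
              intro j hj
              rw [Finset.mem_range] at hj
              congr 2
              omega
            rw [hrefl]
            have := sum_div_pow_le k T
            omega
    have hk1D : k + 1 ≤ D := by omega
    calc (∑ d ∈ Finset.Ico 0 (k + 1), min r (ℓ / max 1 (u / 2 ^ d) + 3)) +
          ∑ d ∈ Finset.Ico (k + 1) (D + 1), min r (ℓ / max 1 (u / 2 ^ d) + 3)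
        ≤ (2 * T + 3 * (k + 1)) + (M + 1) * r := Nat.add_le_add htop hbot
      _ ≤ 100 * (D + r * M) := by nlinarith

end BTreeAux

/-- In a balanced strictly binary tree with `u` leaves, the number of distinct ancestors of
any `r` leaves all chosen from within a contiguous block of `ℓ` consecutive leaves is
`O(log u + r·log₂(ℓ/r))` (with the convention `log x = max(1, log x)` inside the bound). -/
theorem ancestors_of_leaves_in_window :
    ∃ c : ℕ, 0 < c ∧
      ∀ (t : BTree) (P : Finset (List Bool)) (a ℓ : ℕ),
        t.balanced →
        (∀ p ∈ P, ∃ x, t.subtreeAt p = some (BTree.leaf x)) →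
        (∀ p ∈ P, a ≤ t.pathOffset p ∧ t.pathOffset p < a + ℓ) →
        ℓ ≤ t.numLeaves →
        (P.biUnion fun p => p.inits.toFinset).card ≤
          c * (Nat.clog 2 t.numLeaves + P.card * max 1 (Nat.log 2 (ℓ / P.card))) := by
  classical
  refine ⟨100, by norm_num, ?_⟩
  intro t P a ℓ hbal hleaf hwin hlu
  rcases P.eq_empty_or_nonempty with rfl | hP
  · simp
  have hr : 0 < P.card := Finset.card_pos.mpr hP
  set A := P.biUnion fun p => p.inits.toFinset with hA
  set D := Nat.clog 2 t.numLeaves with hD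
  have hfib : ∀ q ∈ A, q.length ∈ Finset.range (D + 1) := by
    intro q hq
    rw [hA, Finset.mem_biUnion] at hq
    obtain ⟨p, hp, hqp⟩ := hq
    rw [List.mem_toFinset, List.mem_inits] at hqp
    obtain ⟨x, hx⟩ := hleaf p hp
    have h1 := BTreeAux.depth_le t p x hbal hx
    have h2 := hqp.length_le
    rw [Finset.mem_range]
    omega
  rw [Finset.card_eq_sum_card_fiberwise hfib]
  calc ∑ d ∈ Finset.range (D + 1), (A.filter fun q => q.length = d).card
      ≤ ∑ d ∈ Finset.range (D + 1), min P.card (ℓ / max 1 (t.numLeaves / 2 ^ d) + 3) :=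
        Finset.sum_le_sum fun d _ => BTreeAux.level_bound t P a ℓ d hbal hleaf hwin
    _ ≤ 100 * (D + P.card * max 1 (Nat.log 2 (ℓ / P.card))) :=
        BTreeAux.numeric t.numLeaves ℓ P.card D hr hD
end

section
/- Let S be a sequence of length n over a linearly ordered alphabet, and let 1 ≤ i ≤ j ≤ n and 1 ≤ k ≤ j−i+1. Let n_l be the number of positions p ∈ [i,j] with S[p] belonging to the 'left half' L of the alphabet (a downward-closed set of symbols). If k ≤ n_l, then the k-th smallest element of the multiset {S[p] : i ≤ p ≤ j} equals the k-th smallest element of the sub-multiset of those values lying in L; otherwise it equals the (k − n_l)-th smallest element of the sub-multiset of values lying outside L. -/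
/-- The `k`-th smallest element (1-based) of the multiset given by a list. -/
def kthSmallest {α : Type*} [LinearOrder α] [Inhabited α] (l : List α) (k : ℕ) : α :=
  (l.mergeSort (fun a b => decide (a ≤ b))).getD (k - 1) default

lemma sorted_msort {α : Type*} [LinearOrder α] (l : List α) :
    List.Pairwise (· ≤ ·) (l.mergeSort (fun a b => decide (a ≤ b))) := by
  simpa using List.pairwise_mergeSort' (· ≤ ·) l

lemma msort_split {α : Type*} [LinearOrder α] (L : Set α) [DecidablePred (· ∈ L)]
    (hL : ∀ a b : α, a ≤ b → b ∈ L → a ∈ L) (l : List α) :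
    l.mergeSort (fun a b => decide (a ≤ b)) =
      (l.filter (fun a => decide (a ∈ L))).mergeSort (fun a b => decide (a ≤ b)) ++
      (l.filter (fun a => decide (a ∉ L))).mergeSort (fun a b => decide (a ≤ b)) := by
  refine (fun h s1 s2 => List.Perm.eq_of_pairwise' s1 s2 h) ?_ (sorted_msort l) ?_
  · refine (List.mergeSort_perm l _).trans ?_
    refine ((List.filter_append_perm (fun a => decide (a ∈ L)) l).symm).trans ?_
    refine List.Perm.append ?_ ?_
    · exact (List.mergeSort_perm _ _).symm
    · have : (fun a => !decide (a ∈ L)) = (fun a : α => decide (a ∉ L)) := by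
        funext a; simp
      rw [this]
      exact (List.mergeSort_perm _ _).symm
  · rw [List.pairwise_append]
    refine ⟨sorted_msort _, sorted_msort _, ?_⟩
    intro x hx y hy
    have hx' : x ∈ L := by
      have := (List.mergeSort_perm _ _).mem_iff.mp hx
      simpa using (List.mem_filter.mp this).2
    have hy' : y ∉ L := by
      have := (List.mergeSort_perm _ _).mem_iff.mp hy
      simpa using (List.mem_filter.mp this).2
    by_contra h
    exact hy' (hL y x (le_of_not_ge h) hx')


/-- Correctness invariant of the wavelet-tree range-quantile recursion: with `L` a
downward-closed set of symbols and `n_l` the number of positions of the range whose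
symbol lies in `L`, if `k ≤ n_l` the `k`-th smallest value of the range is the `k`-th
smallest among the values in `L`, and otherwise it is the `(k − n_l)`-th smallest among
the values outside `L`. (Positions are 0-based; the range is `S[i..j]`.) -/
theorem rqq_recursion_invariant {α : Type*} [LinearOrder α] [Inhabited α]
    (S : List α) (L : Set α) [DecidablePred (· ∈ L)]
    (hL : ∀ a b : α, a ≤ b → b ∈ L → a ∈ L)
    (i j k : ℕ) (hij : i ≤ j) (hj : j < S.length) (hk1 : 1 ≤ k) (hk2 : k ≤ j - i + 1) :
    let sub := (S.drop i).take (j - i + 1)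
    let nl := (sub.filter (fun a => decide (a ∈ L))).length
    (k ≤ nl →
      kthSmallest sub k = kthSmallest (sub.filter (fun a => decide (a ∈ L))) k) ∧
    (nl < k →
      kthSmallest sub k = kthSmallest (sub.filter (fun a => decide (a ∉ L))) (k - nl)) := by
  intro sub nl
  have hsplit := msort_split L hL sub
  have hlen : ((sub.filter (fun a => decide (a ∈ L))).mergeSort
      (fun a b => decide (a ≤ b))).length = nl := by
    exact List.length_mergeSort _
  constructor
  · intro hk
    unfold kthSmallest
    rw [hsplit, List.getD, List.getD, List.getElem?_append_left (by rw [hlen]; omega)]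
  · intro hk
    unfold kthSmallest
    rw [hsplit, List.getD, List.getD, List.getElem?_append_right (by rw [hlen]; omega)]
    rw [hlen, show k - 1 - nl = k - nl - 1 from by omega]
end

section
/- Let S be a sequence over a linearly ordered alphabet and let L be a downward-closed subset of the alphabet with complement R. Fix a range [i,j] and a threshold x. If x ∈ R, then the smallest value ≥ x occurring in S[i..j] (if it exists) occurs among the positions of [i,j] whose symbols lie in R. If x ∈ L, then the smallest value ≥ x in S[i..j] is: the smallest value ≥ x among positions with symbols in L if such a value exists, and otherwise the minimum value among positions with symbols in R (if any). -/
private lemma min?_eq_some_iff_lin {α : Type*} [LinearOrder α] {l : List α} {a : α} :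
    l.min? = some a ↔ a ∈ l ∧ ∀ b ∈ l, a ≤ b :=
  List.min?_eq_some_iff

/-- Correctness invariant of the wavelet-tree range-next-value recursion. Let `L` be a
downward-closed set of symbols with complement `R`, and consider the range `S[i..j]`
(0-based positions) and a threshold `x`.
* If `x ∈ R`, the smallest value `≥ x` occurring in the range (as an optional minimum)
  equals the smallest value `≥ x` among the positions whose symbols lie in `R`.
* If `x ∈ L`, the smallest value `≥ x` in the range is the smallest value `≥ x` among
  the positions with symbols in `L` when such a value exists, and otherwise the minimum
  value among the positions with symbols in `R` (if any). -/
theorem rnv_recursion_invariant {α : Type*} [LinearOrder α]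
    (S : List α) (L : Set α) [DecidablePred (· ∈ L)]
    (hL : ∀ a b : α, a ≤ b → b ∈ L → a ∈ L)
    (i j : ℕ) (x : α) (hij : i ≤ j) (hj : j < S.length) :
    let sub := (S.drop i).take (j - i + 1)
    let big := sub.filter (fun a => decide (x ≤ a))
    let leftGe := sub.filter (fun a => decide (a ∈ L ∧ x ≤ a))
    let rightAll := sub.filter (fun a => decide (a ∉ L))
    (x ∉ L →
      big.min? = (sub.filter (fun a => decide (a ∉ L ∧ x ≤ a))).min?) ∧
    (x ∈ L →
      (leftGe ≠ [] → big.min? = leftGe.min?) ∧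
      (leftGe = [] → big.min? = rightAll.min?)) := by
  intro sub big leftGe rightAll
  constructor
  · intro hx
    have : big = sub.filter (fun a => decide (a ∉ L ∧ x ≤ a)) := by
      apply List.filter_congr
      intro a _
      simp only [decide_eq_decide]
      constructor
      · intro h; exact ⟨fun haL => hx (hL x a h haL), h⟩
      · exact fun h => h.2
    rw [this]
  · intro hx
    have hRx : ∀ a : α, a ∉ L → x ≤ a := by
      intro a ha
      by_contra h
      exact ha (hL a x (le_of_not_ge h) hx)
    constructor
    · intro hne
      obtain ⟨m, hm⟩ : ∃ m, leftGe.min? = some m := by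
        cases h : leftGe.min? with
        | none => exact absurd (List.min?_eq_none_iff.mp h) hne
        | some m => exact ⟨m, rfl⟩
      obtain ⟨hmem, hmin⟩ := min?_eq_some_iff_lin.mp hm
      rw [hm]
      rw [min?_eq_some_iff_lin]
      simp only [leftGe, List.mem_filter, decide_eq_true_eq] at hmem
      obtain ⟨hmsub, hmL, hmx⟩ := hmem
      refine ⟨List.mem_filter.mpr ⟨hmsub, by simpa using hmx⟩, ?_⟩
      intro b hb
      rw [List.mem_filter] at hb
      obtain ⟨hbsub, hbx⟩ := hb
      simp only [decide_eq_true_eq] at hbx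
      by_cases hbL : b ∈ L
      · exact hmin b (List.mem_filter.mpr ⟨hbsub, by simp [hbL, hbx]⟩)
      · by_contra h
        exact hbL (hL b m (le_of_not_ge h) hmL)
    · intro hemp
      have : big = rightAll := by
        apply List.filter_congr
        intro a ha
        simp only [decide_eq_decide]
        constructor
        · intro h hmem
          have : a ∈ leftGe := by
            simp only [leftGe, List.mem_filter]
            exact ⟨ha, by simp [hmem, h]⟩
          simp [hemp] at this
        · exact fun h => hRx a h
      rw [this]
end

section
/- With the wavelet-tree report procedure, listing the docc distinct symbols (with frequencies) occurring in a range D[sp..ep] of the document array over alphabet [1,m] takes O(docc · log₂(m/docc) + log m) node visits; in particular, the number of tree nodes visited is bounded by a constant times the number of ancestors of the docc leaves reached. -/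
namespace BTree

/-- Number of wavelet-tree nodes visited by the `report` recursion on a query range
whose restriction to the symbols below the current node is `l`: a node is visited iff
its mapped interval is nonempty. -/
def visits : BTree → List ℕ → ℕ
  | _, [] => 0
  | leaf _, _ => 1
  | node tl tr, l =>
      1 + visits tl (l.filter fun c => decide (c ∈ tl.leaves)) +
        visits tr (l.filter fun c => decide (c ∈ tr.leaves))

end BTree

namespace BTree

lemma numLeaves_pos (t : BTree) : 0 < t.numLeaves := by
  induction t with
  | leaf a => simp [numLeaves, leaves]
  | node l r ihl ihr => simp [numLeaves, leaves] at *; omega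

def B (h r : ℕ) : ℕ := ∑ d ∈ Finset.range (h + 1), min (2 ^ d) r

lemma B_succ_one_side (h r : ℕ) (hr : 1 ≤ r) : 1 + B h r ≤ B (h + 1) r := by
  have : B (h + 1) r = B h r + min (2 ^ (h + 1)) r := Finset.sum_range_succ _ _
  have h1 : 1 ≤ min (2 ^ (h + 1)) r := le_min (Nat.one_le_two_pow) hr
  omega

lemma B_combine (h r1 r2 : ℕ) (h1 : 1 ≤ r1) (h2 : 1 ≤ r2) :
    1 + B h r1 + B h r2 ≤ B (h + 1) (r1 + r2) := by
  have e : B (h + 1) (r1 + r2) =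
      (∑ i ∈ Finset.range (h + 1), min (2 ^ (i + 1)) (r1 + r2)) + min (2 ^ 0) (r1 + r2) :=
    Finset.sum_range_succ' _ _
  have e0 : min (2 ^ 0) (r1 + r2) = 1 := by simp; omega
  have hsum : B h r1 + B h r2 ≤ ∑ i ∈ Finset.range (h + 1), min (2 ^ (i + 1)) (r1 + r2) := by
    rw [B, B, ← Finset.sum_add_distrib]
    refine Finset.sum_le_sum fun i _ => ?_
    have : 2 ^ (i + 1) = 2 ^ i + 2 ^ i := by ring
    omega
  omega

lemma B_sum_le (h k r : ℕ) (hr : r ≤ 2 ^ k) :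
    B h r ≤ 2 ^ min (h + 1) k + (h + 1 - k) * r := by
  induction h with
  | zero =>
      have e : B 0 r = min 1 r := by simp [B]
      have h1 : (1:ℕ) ≤ 2 ^ min (0 + 1) k := Nat.one_le_two_pow
      have h2 : min 1 r ≤ 1 := min_le_left _ _
      omega
  | succ h ih =>
      have e : B (h + 1) r = B h r + min (2 ^ (h + 1)) r := Finset.sum_range_succ _ _
      rcases le_or_gt k (h + 1) with hk | hk
      · rw [min_eq_right hk] at ih
        rw [min_eq_right (by omega : k ≤ h + 1 + 1)]
        have ha : h + 1 + 1 - k = (h + 1 - k) + 1 := by omega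
        have hb2 : ((h + 1 - k) + 1) * r = (h + 1 - k) * r + r := by ring
        rw [ha, hb2]
        have : min (2 ^ (h + 1)) r ≤ r := min_le_right _ _
        omega
      · rw [min_eq_left (by omega : h + 1 ≤ k), (by omega : h + 1 - k = 0)] at ih
        rw [min_eq_left (by omega : h + 1 + 1 ≤ k), (by omega : h + 1 + 1 - k = 0)]
        have hm : min (2 ^ (h + 1)) r ≤ 2 ^ (h + 1) := min_le_left _ _
        have pw : (2:ℕ) ^ (h + 1 + 1) = 2 ^ (h + 1) + 2 ^ (h + 1) := by ring
        simp only [Nat.zero_mul] at *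
        omega

lemma log_div_bound (r m : ℕ) (h1 : 1 ≤ r) (h2 : r ≤ m) :
    Nat.log 2 m ≤ Nat.log 2 (m / r) + Nat.log 2 r + 1 := by
  apply Nat.le_of_lt_succ
  apply Nat.log_lt_of_lt_pow (by omega)
  have hmod : m % r < r := Nat.mod_lt _ (by omega)
  have hdm : m = r * (m / r) + m % r := (Nat.div_add_mod m r).symm
  have hexp : r * (m / r + 1) = r * (m / r) + r := by ring
  have hq : m / r + 1 ≤ 2 ^ (Nat.log 2 (m / r) + 1) := Nat.lt_pow_succ_log_self (by norm_num) _
  have hrr : r ≤ 2 ^ (Nat.log 2 r + 1) := (Nat.lt_pow_succ_log_self (by norm_num) _).le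
  calc m < r * (m / r + 1) := by omega
    _ ≤ 2 ^ (Nat.log 2 r + 1) * 2 ^ (Nat.log 2 (m / r) + 1) := Nat.mul_le_mul hrr hq
    _ = 2 ^ Nat.succ (Nat.log 2 (m / r) + Nat.log 2 r + 1) := by
        rw [← pow_add]
        congr 1
        omega



lemma B_mono_h {h1 h2 : ℕ} (r : ℕ) (h : h1 ≤ h2) : B h1 r ≤ B h2 r :=
  Finset.sum_le_sum_of_subset (Finset.range_subset_range.mpr (by omega))

lemma B_final (m r : ℕ) (h1 : 1 ≤ r) (h2 : r ≤ m) :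
    B (Nat.clog 2 m) r ≤ 7 * (r * max 1 (Nat.log 2 (m / r))) := by
  set h := Nat.clog 2 m with hh0
  set k := Nat.clog 2 r with hk0
  have hrk : r ≤ 2 ^ k := Nat.le_pow_clog (by norm_num) r
  have hb := B_sum_le h k r hrk
  have hk_le : k ≤ Nat.log 2 r + 1 :=
    (Nat.clog_le_iff_le_pow (by norm_num)).mpr (Nat.lt_pow_succ_log_self (by norm_num) r).le
  have h2k : (2:ℕ) ^ k ≤ 2 * r := by
    calc (2:ℕ) ^ k ≤ 2 ^ (Nat.log 2 r + 1) := Nat.pow_le_pow_right (by norm_num) hk_le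
      _ = 2 * 2 ^ Nat.log 2 r := by ring
      _ ≤ 2 * r := by
          have := Nat.pow_log_le_self 2 (show r ≠ 0 by omega); omega
  have h2min : (2:ℕ) ^ min (h + 1) k ≤ 2 * r :=
    le_trans (Nat.pow_le_pow_right (by norm_num) (min_le_right _ _)) h2k
  have hkg : Nat.log 2 r ≤ k := Nat.log_le_clog 2 r
  have hhle : h ≤ Nat.log 2 m + 1 :=
    (Nat.clog_le_iff_le_pow (by norm_num)).mpr (Nat.lt_pow_succ_log_self (by norm_num) m).le
  have hlog := log_div_bound r m h1 h2
  set lq := Nat.log 2 (m / r) with hlq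
  set L := max 1 lq with hL
  have hL1 : 1 ≤ L := le_max_left _ _
  have hLq : lq ≤ L := le_max_right _ _
  have hsub : h + 1 - k ≤ 5 * L := by omega
  have h5 : (h + 1 - k) * r ≤ 5 * L * r := Nat.mul_le_mul_right _ hsub
  calc B h r ≤ 2 ^ min (h + 1) k + (h + 1 - k) * r := hb
    _ ≤ 2 * r + 5 * L * r := add_le_add h2min h5
    _ ≤ 2 * (L * r) + 5 * (L * r) := by
        have hr : r ≤ L * r := Nat.le_mul_of_pos_left r (by omega)
        have e : 5 * L * r = 5 * (L * r) := by ring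
        omega
    _ = 7 * (r * L) := by ring

lemma visits_nil (t : BTree) : t.visits [] = 0 := by cases t <;> rfl

lemma visits_cons (tl tr : BTree) (a : ℕ) (l : List ℕ) :
    visits (node tl tr) (a :: l) =
      1 + visits tl ((a :: l).filter fun c => decide (c ∈ tl.leaves)) +
        visits tr ((a :: l).filter fun c => decide (c ∈ tr.leaves)) := rfl

lemma dedup_len_pos {l : List ℕ} (hl : l ≠ []) : 1 ≤ l.dedup.length := by
  have : l.dedup ≠ [] := by simpa [List.dedup_eq_nil] using hl
  exact List.length_pos_iff.mpr this

lemma visits_le (t : BTree) : ∀ l : List ℕ, t.leaves.Nodup → t.balanced →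
    l ≠ [] → (∀ c ∈ l, c ∈ t.leaves) →
    t.visits l ≤ B (Nat.clog 2 t.numLeaves) l.dedup.length := by
  induction t with
  | leaf a =>
      intro l _ _ hl _
      obtain ⟨c, l', rfl⟩ := List.exists_cons_of_ne_nil hl
      have h1 : visits (leaf a) (c :: l') = 1 := rfl
      have hr : 1 ≤ ((c :: l').dedup).length := dedup_len_pos (by simp)
      have hnum : numLeaves (leaf a) = 1 := rfl
      rw [h1, hnum, Nat.clog_one_right]
      have : B 0 ((c :: l').dedup.length) = min 1 ((c :: l').dedup.length) := by simp [B]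
      omega
  | node tl tr ihl ihr =>
      intro l hnd hb hl hsub
      obtain ⟨hb1, hb2, hbl, hbr⟩ := hb
      simp only [leaves, List.nodup_append] at hnd
      obtain ⟨hndl, hndr, hdisj⟩ := hnd
      have hml := numLeaves_pos tl
      have hmr := numLeaves_pos tr
      have hm : numLeaves (node tl tr) = tl.numLeaves + tr.numLeaves := by
        simp [numLeaves, leaves]
      have m2 : 2 ≤ tl.numLeaves + tr.numLeaves := by omega
      have hcl : Nat.clog 2 (tl.numLeaves + tr.numLeaves) =
          Nat.clog 2 ((tl.numLeaves + tr.numLeaves + 1) / 2) + 1 := by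
        have h := Nat.clog_of_two_le (b := 2) (by norm_num) m2
        have e : tl.numLeaves + tr.numLeaves + 2 - 1 = tl.numLeaves + tr.numLeaves + 1 := by omega
        rwa [e] at h
      set h' := Nat.clog 2 ((tl.numLeaves + tr.numLeaves + 1) / 2) with hh'
      have hclL : Nat.clog 2 tl.numLeaves ≤ h' := by
        apply Nat.clog_mono_right
        omega
      have hclR : Nat.clog 2 tr.numLeaves ≤ h' := by
        apply Nat.clog_mono_right
        omega
      have hcov : ∀ c ∈ l, c ∈ tl.leaves ∨ c ∈ tr.leaves := by
        intro c hc
        have := hsub c hc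
        simpa [leaves] using this
      -- partition of distinct symbols
      have perm1 : ((l.filter fun c => decide (c ∈ tl.leaves)).dedup).Perm
          (l.dedup.filter fun c => decide (c ∈ tl.leaves)) := by
        apply (List.perm_ext_iff_of_nodup (List.nodup_dedup _)
          ((List.nodup_dedup l).filter _)).mpr
        intro a
        simp [List.mem_dedup, List.mem_filter]
      have perm2 : ((l.filter fun c => decide (c ∈ tr.leaves)).dedup).Perm
          (l.dedup.filter fun c => decide (c ∈ tr.leaves)) := by
        apply (List.perm_ext_iff_of_nodup (List.nodup_dedup _)
          ((List.nodup_dedup l).filter _)).mpr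
        intro a
        simp [List.mem_dedup, List.mem_filter]
      have e2 : l.dedup.filter (fun c => decide (c ∈ tr.leaves)) =
          l.dedup.filter (fun c => !decide (c ∈ tl.leaves)) := by
        apply List.filter_congr
        intro c hc
        have hcv := hcov c (List.mem_dedup.mp hc)
        rcases hcv with h | h
        · have h4 : c ∉ tr.leaves := fun h' => hdisj c h c h' rfl
          simp [h, h4]
        · by_cases h3 : c ∈ tl.leaves
          · exact absurd h (fun h' => hdisj c h3 c h' rfl)
          · simp [h, h3]
      have hlenpart :
          ((l.filter fun c => decide (c ∈ tl.leaves)).dedup).length +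
            ((l.filter fun c => decide (c ∈ tr.leaves)).dedup).length = l.dedup.length := by
        rw [perm1.length_eq, perm2.length_eq, e2]
        have := (List.filter_append_perm (fun c => decide (c ∈ tl.leaves)) l.dedup).length_eq
        simpa using this
      obtain ⟨c, l', rfl⟩ := List.exists_cons_of_ne_nil hl
      rw [visits_cons, hm, hcl]
      set l1 := ((c :: l').filter fun c => decide (c ∈ tl.leaves)) with hl1def
      set l2 := ((c :: l').filter fun c => decide (c ∈ tr.leaves)) with hl2def
      have hrr : 1 ≤ (c :: l').dedup.length := dedup_len_pos (by simp)
      have hsubl : ∀ x ∈ l1, x ∈ tl.leaves := by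
        intro x hx
        have := List.of_mem_filter hx
        simpa using this
      have hsubr : ∀ x ∈ l2, x ∈ tr.leaves := by
        intro x hx
        have := List.of_mem_filter hx
        simpa using this
      by_cases hc1 : l1 = []
      · have hr1 : l1.dedup.length = 0 := by rw [hc1]; simp
        have hr2 : l2.dedup.length = (c :: l').dedup.length := by omega
        have hc2 : l2 ≠ [] := by
          intro h
          rw [h] at hr2
          simp at hr2
          omega
        have hv := ihr l2 hndr hbr hc2 hsubr
        have hB := B_mono_h (l2.dedup.length) hclR
        have hstep := B_succ_one_side h' ((c :: l').dedup.length) hrr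
        rw [hr2] at hv hB
        rw [hc1, visits_nil]
        omega
      · by_cases hc2 : l2 = []
        · have hr2 : l2.dedup.length = 0 := by rw [hc2]; simp
          have hr1 : l1.dedup.length = (c :: l').dedup.length := by omega
          have hv := ihl l1 hndl hbl hc1 hsubl
          have hB := B_mono_h (l1.dedup.length) hclL
          have hstep := B_succ_one_side h' ((c :: l').dedup.length) hrr
          rw [hr1] at hv hB
          rw [hc2, visits_nil]
          omega
        · have h1 := ihl l1 hndl hbl hc1 hsubl
          have h2 := ihr l2 hndr hbr hc2 hsubr
          have hB1 := B_mono_h (l1.dedup.length) hclL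
          have hB2 := B_mono_h (l2.dedup.length) hclR
          have hcomb := B_combine h' (l1.dedup.length) (l2.dedup.length)
            (dedup_len_pos hc1) (dedup_len_pos hc2)
          rw [hlenpart] at hcomb
          omega


end BTree

/-- Listing the `docc` distinct symbols (with frequencies) occurring in a range
`D[sp..ep]` of the document array over alphabet of size `m` with the wavelet-tree
report procedure takes `O(docc·log₂(m/docc) + log m)` node visits (with the convention
`log x = max(1, log x)`). -/
theorem report_visit_bound :
    ∃ c0 : ℕ, 0 < c0 ∧
      ∀ (t : BTree) (D : List ℕ) (sp ep : ℕ),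
        t.balanced → t.leaves.Pairwise (· < ·) → (∀ c ∈ D, c ∈ t.leaves) →
        sp ≤ ep → ep < D.length →
        let sub := (D.drop sp).take (ep - sp + 1)
        let docc := sub.dedup.length
        t.visits sub ≤
          c0 * (docc * max 1 (Nat.log 2 (t.numLeaves / docc)) +
            Nat.clog 2 t.numLeaves) := by
  refine ⟨7, by norm_num, ?_⟩
  intro t D sp ep hb hs hD hle hlen sub docc
  have hnd : t.leaves.Nodup := hs.nodup
  have hne : sub ≠ [] := by
    have hlensub : sub.length = min (ep - sp + 1) (D.length - sp) := by
      simp [sub, List.length_take, List.length_drop]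
    intro h
    rw [h] at hlensub
    simp at hlensub
    omega
  have hsubD : ∀ c ∈ sub, c ∈ t.leaves := by
    intro c hc
    exact hD c (List.mem_of_mem_drop (List.mem_of_mem_take hc))
  have hr1 : 1 ≤ docc := BTree.dedup_len_pos hne
  have hrm : docc ≤ t.numLeaves := by
    have hsp : sub.dedup.Subperm t.leaves :=
      List.subperm_of_subset (List.nodup_dedup _)
        (fun c hc => hsubD c (List.mem_dedup.mp hc))
    exact hsp.length_le
  calc t.visits sub ≤ BTree.B (Nat.clog 2 t.numLeaves) docc :=
        BTree.visits_le t sub hnd hb hne hsubD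
    _ ≤ 7 * (docc * max 1 (Nat.log 2 (t.numLeaves / docc))) :=
        BTree.B_final t.numLeaves docc hr1 hrm
    _ ≤ 7 * (docc * max 1 (Nat.log 2 (t.numLeaves / docc)) + Nat.clog 2 t.numLeaves) :=
        Nat.mul_le_mul_left 7 (Nat.le_add_right _ _)
end

section
/- Term-frequency decoding from run-length bitmaps: let a list of term frequencies tf[1..df] be nonincreasing with v distinct values, let T[1..M] (M = tf[1]) mark the distinct values (T[x] = 1 iff x is a value taken by tf), and let R[1..df] mark the positions where the value changes (R[1] = 1 and R[i] = 1 iff tf[i] ≠ tf[i−1]). Then for all 1 ≤ i ≤ df: tf[i] = select_1(T, v − rank_1(R, i) + 1). -/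
/-- `rank₁(R,i)`: number of 1-bits among the first `i` bits of `R`. -/
def rank1 (R : List Bool) (i : ℕ) : ℕ := (R.take i).count true

/-- `select₁(T,j)`: the 1-based position of the `j`-th 1-bit of `T`. -/
def select1 (T : List Bool) (j : ℕ) : ℕ :=
  ((List.range T.length).filter fun p => decide (T.getD p false = true)).getD (j - 1) 0 + 1

private theorem sorted_getD_aux (L : List ℕ) (hL : L.Pairwise (· < ·)) (y : ℕ) (hy : y ∈ L)
    (k : ℕ) (hk : (L.filter (fun x => x < y)).length = k) : L.getD k 0 = y := by
  induction L generalizing k with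
  | nil => simp at hy
  | cons a t ih =>
    rw [List.pairwise_cons] at hL
    by_cases hya : y = a
    · subst hya
      have h1 : (y :: t).filter (fun x => decide (x < y)) = [] := by
        rw [List.filter_eq_nil_iff]
        intro x hx
        rcases List.mem_cons.mp hx with rfl | hx
        · simp
        · simpa using Nat.not_lt.mpr (le_of_lt (hL.1 x hx))
      simp only [h1, List.length_nil] at hk
      subst hk; rfl
    · have h : y ∈ t := by
        rcases List.mem_cons.mp hy with h' | h'
        · exact absurd h' hya
        · exact h'
      have hay : a < y := hL.1 y h
      have h1 : (a :: t).filter (fun x => decide (x < y)) = a :: t.filter (fun x => decide (x < y)) := by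
        simp [List.filter_cons, hay]
      rw [h1] at hk
      cases k with
      | zero => simp at hk
      | succ k' =>
        simp only [List.length_cons, Nat.succ.injEq] at hk
        simpa using ih hL.2 h k' hk

private theorem sorted_le_aux (tf : List ℕ) (hmono : tf.Pairwise (fun a b => b ≤ a)) :
    ∀ j k, (hk : k < tf.length) → (hj : j ≤ k) → tf[k]'hk ≤ tf[j]'(by omega) := by
  intro j k hk hj
  rcases Nat.lt_or_ge j k with h | h
  · exact List.pairwise_iff_getElem.mp hmono j k _ hk h
  · have : j = k := le_antisymm (Nat.le_of_lt_succ (Nat.lt_succ_of_le hj)) h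
    subst this; rfl

private theorem rank_card_aux (tf : List ℕ) (hmono : tf.Pairwise (fun a b => b ≤ a)) :
    ∀ i, 1 ≤ i → i ≤ tf.length →
    ((List.range i).filter (fun i0 => decide (i0 = 0 ∨ tf.getD i0 0 ≠ tf.getD (i0-1) 0))).length
      = (tf.take i).toFinset.card := by
  have hle := sorted_le_aux tf hmono
  intro i
  induction i with
  | zero => intro h; omega
  | succ n ih =>
    intro _ hlen
    rcases Nat.eq_zero_or_pos n with rfl | hn
    · have h0 : 0 < tf.length := hlen
      have : tf.take 1 = [tf[0]] := by
        cases tf with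
        | nil => simp at h0
        | cons a t => simp
      simp only [this]
      rw [show List.range (0+1) = [0] from rfl]
      simp
    · have hn' : n ≤ tf.length := le_of_lt hlen
      have hrec := ih hn hn'
      have hnlt : n < tf.length := hlen
      have hn1lt : n - 1 < tf.length := lt_of_le_of_lt (Nat.sub_le n 1) hnlt
      have hrange : List.range (n+1) = List.range n ++ [n] := by
        rw [List.range_succ]
      have htake : tf.take (n+1) = tf.take n ++ [tf[n]] := by
        rw [List.take_succ]
        simp [List.getElem?_eq_getElem hnlt]
      have hmem_iff : tf[n] ∈ (tf.take n).toFinset ↔ tf[n] = tf[n-1] := by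
        constructor
        · intro h
          simp only [List.mem_toFinset] at h
          obtain ⟨j, hj, hje⟩ := List.mem_iff_getElem.mp h
          rw [List.length_take] at hj
          have hjn : j < n := lt_of_lt_of_le hj (min_le_left _ _)
          rw [List.getElem_take] at hje
          have h1 : tf[n] ≤ tf[n-1] := hle (n-1) n hnlt (Nat.sub_le n 1)
          have h2 : tf[n-1] ≤ tf[j]'(lt_trans hjn hnlt) := hle j (n-1) hn1lt (by omega)
          omega
        · intro h
          simp only [List.mem_toFinset]
          rw [h]
          exact List.mem_iff_getElem.mpr ⟨n-1, by rw [List.length_take]; omega, by rw [List.getElem_take]⟩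
      have hgd1 : tf.getD n 0 = tf[n] := List.getD_eq_getElem tf 0 hnlt
      have hgd2 : tf.getD (n-1) 0 = tf[n-1] := List.getD_eq_getElem tf 0 hn1lt
      rw [hrange, List.filter_append, List.length_append, hrec, htake, List.toFinset_append]
      simp only [List.toFinset_cons, List.toFinset_nil, insert_empty_eq]
      rw [List.filter_singleton]
      by_cases hne : tf[n] = tf[n-1]
      · have hcond : decide (n = 0 ∨ tf.getD n 0 ≠ tf.getD (n-1) 0) = false := by
          simp only [decide_eq_false_iff_not]
          push_neg
          exact ⟨by omega, by rw [hgd1, hgd2]; simpa using hne⟩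
        rw [hcond, Bool.cond_false]
        have hmem : tf[n] ∈ (tf.take n).toFinset := hmem_iff.mpr hne
        rw [Finset.union_eq_left.mpr (by simpa using hmem)]
        simp
      · have hcond : decide (n = 0 ∨ tf.getD n 0 ≠ tf.getD (n-1) 0) = true := by
          simp only [decide_eq_true_eq]
          right; rw [hgd1, hgd2]; exact hne
        rw [hcond, Bool.cond_true]
        have hmem : tf[n] ∉ (tf.take n).toFinset := fun h => hne (hmem_iff.mp h)
        rw [Finset.union_comm, show ({tf[n]} : Finset ℕ) ∪ (List.take n tf).toFinset = insert tf[n] (List.take n tf).toFinset from rfl, Finset.card_insert_of_notMem hmem]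
        simp [Nat.add_comm]

/-- Term-frequency decoding from run-length bitmaps. Let `tf[1..df]` be a nonincreasing
list of positive term frequencies with `v` distinct values, let `T[1..M]` (`M = tf[1]`)
mark the distinct values (`T[x] = 1` iff `x` is a value taken by `tf`), and let
`R[1..df]` mark the run heads (`R[1] = 1`, and `R[i] = 1` iff `tf[i] ≠ tf[i−1]`).
Then for all `1 ≤ i ≤ df`: `tf[i] = select₁(T, v − rank₁(R, i) + 1)`. -/
theorem tf_decoding (tf : List ℕ) (hne : tf ≠ [])
    (hpos : ∀ x ∈ tf, 0 < x)
    (hmono : tf.Pairwise (fun a b => b ≤ a)) :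
    let df := tf.length
    let v := tf.dedup.length
    let M := tf.getD 0 0
    let T : List Bool := (List.range M).map fun x => decide ((x + 1) ∈ tf)
    let R : List Bool := (List.range df).map fun i0 =>
      decide (i0 = 0 ∨ tf.getD i0 0 ≠ tf.getD (i0 - 1) 0)
    ∀ i, 1 ≤ i → i ≤ df →
      tf.getD (i - 1) 0 = select1 T (v - rank1 R i + 1) := by
  intro df v M T R i hi1 hidf
  have hle := sorted_le_aux tf hmono
  have hlen : 0 < tf.length := List.length_pos_iff.mpr hne
  have hi1lt : i - 1 < tf.length := by
    have : i ≤ tf.length := hidf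
    omega
  set y := tf.getD (i-1) 0 with hy
  have hyget : y = tf[i-1] := List.getD_eq_getElem tf 0 hi1lt
  have hymem : y ∈ tf := by rw [hyget]; exact List.getElem_mem _
  have hypos : 0 < y := hpos y hymem
  have hM : M = tf[0] := List.getD_eq_getElem tf 0 hlen
  have hyM : y ≤ M := by rw [hyget, hM]; exact hle 0 (i-1) hi1lt (Nat.zero_le _)
  set r := (tf.take i).toFinset.card with hr
  -- rank computation
  have hrank : rank1 R i = r := by
    show ((R.take i).count true) = r
    have h1 : R.take i = (List.range i).map (fun i0 =>
        decide (i0 = 0 ∨ tf.getD i0 0 ≠ tf.getD (i0 - 1) 0)) := by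
      show ((List.range df).map _).take i = _
      rw [← List.map_take, List.take_range, Nat.min_eq_left hidf]
    rw [h1]
    rw [show ∀ (f : ℕ → Bool) (n : ℕ), ((List.range n).map f).count true = ((List.range n).filter f).length from by
      intro f n
      simp [List.count_eq_countP, List.countP_map, Function.comp_def,
        List.countP_eq_length_filter, List.filter_map]]
    exact rank_card_aux tf hmono i hi1 hidf
  -- v = card of value set
  have hv : v = tf.toFinset.card := (List.card_toFinset tf).symm
  have hrv : r ≤ v := by
    rw [hv, hr]
    exact Finset.card_le_card (fun x hx => by
      simp only [List.mem_toFinset] at *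
      exact List.take_subset i tf hx)
  -- partition of value set
  have hset : tf.toFinset.filter (fun x => y ≤ x) = (tf.take i).toFinset := by
    ext x
    simp only [Finset.mem_filter, List.mem_toFinset]
    constructor
    · rintro ⟨hx, hyx⟩
      obtain ⟨j, hj, hje⟩ := List.mem_iff_getElem.mp hx
      by_cases hji : j < i
      · exact List.mem_iff_getElem.mpr ⟨j, by rw [List.length_take]; omega,
          by rw [List.getElem_take]; exact hje⟩
      · have h2 : tf[j] ≤ tf[i-1] := hle (i-1) j hj (by omega)
        have h3 : x = y := by rw [hyget]; omega
        rw [h3, hyget]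
        exact List.mem_iff_getElem.mpr ⟨i-1, by rw [List.length_take]; omega,
          by rw [List.getElem_take]⟩
    · intro hx
      obtain ⟨j, hj, hje⟩ := List.mem_iff_getElem.mp hx
      rw [List.length_take] at hj
      have hji : j < i := lt_of_lt_of_le hj (min_le_left _ _)
      have hjlt : j < tf.length := lt_of_lt_of_le hj (min_le_right _ _)
      rw [List.getElem_take] at hje
      refine ⟨List.mem_iff_getElem.mpr ⟨j, hjlt, hje⟩, ?_⟩
      rw [hyget, ← hje]
      exact hle j (i-1) hi1lt (by omega)
  have hcardlt : (tf.toFinset.filter (fun x => x < y)).card = v - r := by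
    have hpart := Finset.card_filter_add_card_filter_not
      (s := tf.toFinset) (p := fun x => y ≤ x)
    have hcompl : tf.toFinset.filter (fun x => ¬ y ≤ x) = tf.toFinset.filter (fun x => x < y) := by
      apply Finset.filter_congr
      intro x _
      simp [Nat.not_le]
    rw [hcompl, hset, ← hr, ← hv] at hpart
    omega
  -- select computation
  show y = select1 T (v - rank1 R i + 1)
  rw [hrank]
  unfold select1
  have hTlen : T.length = M := by simp [T]
  have hfc : (List.range T.length).filter (fun p => decide (T.getD p false = true))
      = (List.range M).filter (fun p => decide ((p+1) ∈ tf)) := by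
    rw [hTlen]
    apply List.filter_congr
    intro p hp
    have hpM : p < M := List.mem_range.mp hp
    have : T.getD p false = decide ((p+1) ∈ tf) := by
      have : p < T.length := by rw [hTlen]; exact hpM
      rw [List.getD_eq_getElem T false this]
      simp [T]
    rw [this]
    simp
  rw [hfc]
  set L := (List.range M).filter (fun p => decide ((p+1) ∈ tf)) with hL
  have hLs : L.Pairwise (· < ·) := (List.pairwise_lt_range (n := M)).filter _
  have hmemL : y - 1 ∈ L := by
    rw [hL, List.mem_filter]
    refine ⟨List.mem_range.mpr (by omega), ?_⟩
    simp only [decide_eq_true_eq]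
    rw [show y - 1 + 1 = y from by omega]
    exact hymem
  have hcount : (L.filter (fun x => x < y - 1)).length = v - r := by
    rw [hL, List.filter_filter]
    rw [show (fun a => decide (a < y-1) && decide ((a+1) ∈ tf))
        = (fun p => decide (p < y-1 ∧ (p+1) ∈ tf)) from by funext p; simp]
    rw [show ((List.range M).filter (fun p => decide (p < y-1 ∧ (p+1) ∈ tf))).length
        = (Finset.filter (fun p => p < y - 1 ∧ (p+1) ∈ tf) (Finset.range M)).card from rfl]
    rw [← hcardlt]
    apply Finset.card_bij (fun p _ => p + 1)
    · intro p hp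
      simp only [Finset.mem_filter, Finset.mem_range] at hp
      simp only [Finset.mem_filter, List.mem_toFinset]
      exact ⟨hp.2.2, by omega⟩
    · intro p hp q hq h
      omega
    · intro x hx
      simp only [Finset.mem_filter, List.mem_toFinset] at hx
      have hx1 : 0 < x := hpos x hx.1
      refine ⟨x - 1, ?_, by omega⟩
      simp only [Finset.mem_filter, Finset.mem_range]
      have hxM : x ≤ M := by
        rw [hM]
        obtain ⟨j, hj, hje⟩ := List.mem_iff_getElem.mp hx.1
        rw [← hje]
        exact hle 0 j hj (Nat.zero_le _)
      refine ⟨by omega, by omega, by rw [show x - 1 + 1 = x from by omega]; exact hx.1⟩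
  have hidx : v - r + 1 - 1 = v - r := by omega
  rw [hidx]
  rw [sorted_getD_aux L hLs (y-1) hmemL (v - r) hcount]
  omega
end
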